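/- Let W > 0 and λ > 0. Suppose u : ℝ → ℝ is continuous on [−1,1], twice differentiable on (−1,1) with u''(x) = λ/(2·(1+u(x)+W)²) for all x ∈ (−1,1), and satisfies u(−1) = u(1) = 0 and u(x) > −1 for all x ∈ (−1,1). Then u is even on [−1,1], i.e. u(−x) = u(x) for all x ∈ [−1,1]. -/

import Mathlib

open Set Filter Topology

lemma abs_aux2 {lam m A B : ℝ} (hm : 0 < m) (hA : m ≤ A) (hB : m ≤ B) (hlam : 0 < lam) :
    |lam / (2 * A ^ 2) - lam / (2 * B ^ 2)| ≤ lam / m ^ 3 * |A - B| := by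
  have hA0 : 0 < A := hm.trans_le hA
  have hB0 : 0 < B := hm.trans_le hB
  wlog hAB : A ≤ B generalizing A B
  · have := this hB hA hB0 hA0 (le_of_not_ge hAB)
    rwa [abs_sub_comm, abs_sub_comm B A] at this
  have hmB : m ^ 2 ≤ B ^ 2 := by nlinarith
  have hmA : m ^ 2 ≤ A ^ 2 := by nlinarith
  have h1 : m ^ 3 ≤ A * B ^ 2 := by
    calc m ^ 3 = m * m ^ 2 := by ring
    _ ≤ A * B ^ 2 := mul_le_mul hA hmB (by positivity) hA0.le
  have h2 : m ^ 3 ≤ A ^ 2 * B := by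
    calc m ^ 3 = m ^ 2 * m := by ring
    _ ≤ A ^ 2 * B := mul_le_mul hmA hB (by positivity) (by positivity)
  have h3 : (A + B) * m ^ 3 ≤ 2 * (A ^ 2 * B ^ 2) := by nlinarith
  have hd : lam / (2 * B ^ 2) ≤ lam / (2 * A ^ 2) := by
    apply div_le_div_of_nonneg_left hlam.le (by positivity)
    nlinarith
  rw [abs_of_nonneg (by linarith), abs_of_nonpos (by linarith)]
  have key : lam / (2 * A ^ 2) - lam / (2 * B ^ 2) = lam * (B - A) * (B + A) / (2 * (A ^ 2 * B ^ 2)) := by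
    field_simp
    ring
  have key2 : lam / m ^ 3 * -(A - B) = lam * (B - A) / m ^ 3 := by ring
  rw [key, key2, div_le_div_iff₀ (by positivity) (by positivity)]
  have h4 : 0 ≤ lam * (B - A) := mul_nonneg hlam.le (by linarith)
  nlinarith [mul_le_mul_of_nonneg_left h3 h4]

theorem stmt_12 (W lam : ℝ) (hW : 0 < W) (hlam : 0 < lam)
    (u u' : ℝ → ℝ)
    (hc : ContinuousOn u (Set.Icc (-1 : ℝ) 1))
    (hu : ∀ x ∈ Set.Ioo (-1 : ℝ) 1, HasDerivAt u (u' x) x)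
    (hu'' : ∀ x ∈ Set.Ioo (-1 : ℝ) 1, HasDerivAt u' (lam / (2 * (1 + u x + W) ^ 2)) x)
    (hum1 : u (-1) = 0) (hu1 : u 1 = 0)
    (hgt : ∀ x ∈ Set.Ioo (-1 : ℝ) 1, u x > -1) :
    ∀ x ∈ Set.Icc (-1 : ℝ) 1, u (-x) = u x := by
  have hIoo : (Set.Ioo (-1:ℝ) 1) ⊆ Set.Icc (-1:ℝ) 1 := Set.Ioo_subset_Icc_self
  have hpos : ∀ x ∈ Set.Ioo (-1:ℝ) 1, 0 < 1 + u x + W := fun x hx => by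
    have := hgt x hx; linarith
  -- u is strictly convex on Icc
  have hsc : StrictConvexOn ℝ (Set.Icc (-1:ℝ) 1) u := by
    apply strictConvexOn_of_deriv2_pos (convex_Icc _ _) hc
    intro x hx
    rw [interior_Icc] at hx
    have hev : deriv u =ᶠ[𝓝 x] u' := by
      filter_upwards [Ioo_mem_nhds hx.1 hx.2] with y hy using (hu y hy).deriv
    have : (deriv^[2] u) x = lam / (2 * (1 + u x + W) ^ 2) := by
      simp only [Function.iterate_succ, Function.iterate_zero, Function.comp_apply, id]
      rw [hev.deriv_eq]
      exact (hu'' x hx).deriv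
    rw [this]
    have := hpos x hx
    positivity
  -- u < 0 on the open interval
  have hneg : ∀ x ∈ Set.Ioo (-1:ℝ) 1, u x < 0 := by
    intro x hx
    have h := hsc.2 (show (-1:ℝ) ∈ Set.Icc (-1:ℝ) 1 by constructor <;> norm_num)
      (show (1:ℝ) ∈ Set.Icc (-1:ℝ) 1 by constructor <;> norm_num)
      (by norm_num)
      (show (0:ℝ) < (1-x)/2 by linarith [hx.2]) (show (0:ℝ) < (1+x)/2 by linarith [hx.1])
      (show (1-x)/2 + (1+x)/2 = 1 by ring)
    rw [hum1, hu1] at h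
    have harg : ((1-x)/2) • (-1:ℝ) + ((1+x)/2) • (1:ℝ) = x := by
      simp only [smul_eq_mul]; ring
    rw [harg] at h
    simpa using h
  -- minimum point
  obtain ⟨x₀, hx₀Icc, hmin⟩ := isCompact_Icc.exists_isMinOn
    (⟨-1, by constructor <;> norm_num⟩ : (Set.Icc (-1:ℝ) 1).Nonempty) hc
  have hminle : ∀ x ∈ Set.Icc (-1:ℝ) 1, u x₀ ≤ u x := fun x hx => isMinOn_iff.mp hmin x hx
  have hux₀ : u x₀ < 0 := lt_of_le_of_lt
    (hminle 0 (by constructor <;> norm_num)) (hneg 0 (by constructor <;> norm_num))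
  have hx₀ : x₀ ∈ Set.Ioo (-1:ℝ) 1 := by
    constructor
    · rcases eq_or_lt_of_le hx₀Icc.1 with h | h
      · exfalso; rw [← h, hum1] at hux₀; exact lt_irrefl 0 hux₀
      · exact h
    · rcases eq_or_lt_of_le hx₀Icc.2 with h | h
      · exfalso; rw [h, hu1] at hux₀; exact lt_irrefl 0 hux₀
      · exact h
  have hu'0 : u' x₀ = 0 :=
    (hmin.isLocalMin (Icc_mem_nhds hx₀.1 hx₀.2)).hasDerivAt_eq_zero (hu x₀ hx₀)
  -- Lipschitz setup
  set m : ℝ := 1 + u x₀ + W with hm_def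
  have hm0 : 0 < m := hpos x₀ hx₀
  have hmle : ∀ x ∈ Set.Icc (-1:ℝ) 1, m ≤ 1 + u x + W := fun x hx => by
    have := hminle x hx; simp only [hm_def]; linarith
  set K : NNReal := Real.toNNReal (max 1 (lam / m ^ 3)) with hK_def
  have hKcoe : (K : ℝ) = max 1 (lam / m ^ 3) :=
    Real.coe_toNNReal _ (le_trans zero_le_one (le_max_left _ _))
  set v : ℝ → ℝ × ℝ → ℝ × ℝ := fun _ p => (p.2, lam / (2 * (1 + p.1 + W) ^ 2)) with hv_def
  set s : ℝ → Set (ℝ × ℝ) := fun _ => {p : ℝ × ℝ | u x₀ ≤ p.1} with hs_def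
  have hlip : ∀ t, LipschitzOnWith K (v t) (s t) := by
    intro t
    apply LipschitzOnWith.of_dist_le_mul
    intro p hp q hq
    rw [Prod.dist_eq, Prod.dist_eq]
    apply max_le
    · calc dist (v t p).1 (v t q).1 = dist p.2 q.2 := rfl
      _ ≤ 1 * max (dist p.1 q.1) (dist p.2 q.2) := by
          rw [one_mul]; exact le_max_right _ _
      _ ≤ (K : ℝ) * max (dist p.1 q.1) (dist p.2 q.2) := by
          apply mul_le_mul_of_nonneg_right _ (le_max_iff.mpr (Or.inl dist_nonneg))
          rw [hKcoe]; exact le_max_left _ _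
    · have hA : m ≤ 1 + p.1 + W := by
        have : u x₀ ≤ p.1 := hp
        simp only [hm_def]; linarith
      have hB : m ≤ 1 + q.1 + W := by
        have : u x₀ ≤ q.1 := hq
        simp only [hm_def]; linarith
      calc dist (v t p).2 (v t q).2
          = |lam / (2 * (1 + p.1 + W) ^ 2) - lam / (2 * (1 + q.1 + W) ^ 2)| := by
            rw [Real.dist_eq]
        _ ≤ lam / m ^ 3 * |(1 + p.1 + W) - (1 + q.1 + W)| := abs_aux2 hm0 hA hB hlam
        _ = lam / m ^ 3 * dist p.1 q.1 := by rw [Real.dist_eq]; ring_nf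
        _ ≤ (K : ℝ) * max (dist p.1 q.1) (dist p.2 q.2) := by
            apply mul_le_mul (by rw [hKcoe]; exact le_max_right _ _)
              (le_max_left _ _) dist_nonneg
              (by rw [hKcoe]; exact le_trans zero_le_one (le_max_left _ _))
  -- the reflected solution and uniqueness
  have hmem : ∀ t ∈ Set.Ioo (-1:ℝ) 1, (fun t => (u t, u' t)) t ∈ s t := by
    intro t ht
    exact hminle t (hIoo ht)
  have key : ∀ t ∈ Set.Ioo (max (-1:ℝ) (2*x₀-1)) (min (1:ℝ) (2*x₀+1)), u t = u (2*x₀ - t) := by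
    set a : ℝ := max (-1:ℝ) (2*x₀-1) with ha_def
    set b : ℝ := min (1:ℝ) (2*x₀+1) with hb_def
    have hsub1 : ∀ t ∈ Set.Ioo a b, t ∈ Set.Ioo (-1:ℝ) 1 := by
      intro t ht
      constructor
      · exact lt_of_le_of_lt (le_max_left _ _) ht.1
      · exact lt_of_lt_of_le ht.2 (min_le_left _ _)
    have hsub2 : ∀ t ∈ Set.Ioo a b, (2*x₀ - t) ∈ Set.Ioo (-1:ℝ) 1 := by
      intro t ht
      have h1 : 2*x₀ - 1 ≤ a := le_max_right _ _
      have h2 : b ≤ 2*x₀ + 1 := min_le_right _ _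
      constructor <;> [linarith [ht.2]; linarith [ht.1]]
    have hx₀ab : x₀ ∈ Set.Ioo a b := by
      constructor
      · apply max_lt hx₀.1 (by linarith [hx₀.2])
      · apply lt_min hx₀.2 (by linarith [hx₀.1])
    have heqOn := ODE_solution_unique_of_mem_Ioo (fun t _ => hlip t) hx₀ab
      (f := fun t => (u t, u' t)) (g := fun t => (u (2*x₀ - t), -u' (2*x₀ - t)))
      (fun t ht => by
        refine ⟨?_, hmem t (hsub1 t ht)⟩
        exact (hu t (hsub1 t ht)).prodMk (hu'' t (hsub1 t ht)))
      (fun t ht => by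
        have hin : HasDerivAt (fun t : ℝ => 2*x₀ - t) (-1) t := by
          simpa using (hasDerivAt_id t).const_sub (2*x₀)
        have h2 := hsub2 t ht
        constructor
        · have hd1 : HasDerivAt (fun t : ℝ => u (2*x₀ - t)) (-u' (2*x₀ - t)) t := by
            have := HasDerivAt.comp t (hu _ h2) hin
            simpa [mul_neg_one, Function.comp_def] using this
          have hd2 : HasDerivAt (fun t : ℝ => -u' (2*x₀ - t))
              (lam / (2 * (1 + u (2*x₀ - t) + W) ^ 2)) t := by
            have := (HasDerivAt.comp t (hu'' _ h2) hin).neg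
            simpa [mul_neg_one, Function.comp_def, Pi.neg_def] using this
          exact hd1.prodMk hd2
        · exact hminle _ (hIoo h2))
      (by
        have h2x : 2*x₀ - x₀ = x₀ := by ring
        simp [h2x, hu'0])
    intro t ht
    have := heqOn ht
    exact congrArg Prod.fst this
  -- x₀ = 0
  have hx0 : x₀ = 0 := by
    by_contra hne0
    rcases lt_or_gt_of_ne hne0 with hlt | hgt'
    · -- x₀ < 0 : right endpoint b = 2x₀+1 ∈ (-1,1)
      have hb : min (1:ℝ) (2*x₀+1) = 2*x₀+1 := min_eq_right (by linarith)
      have ha : max (-1:ℝ) (2*x₀-1) = -1 := max_eq_left (by linarith)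
      set b : ℝ := 2*x₀+1 with hbd
      have hbIoo : b ∈ Set.Ioo (-1:ℝ) 1 := ⟨by linarith [hx₀.1], by linarith⟩
      have habn : (-1:ℝ) < b := by linarith [hx₀.1]
      haveI hne : (𝓝[Set.Ioo (-1:ℝ) b] b).NeBot := by
        apply mem_closure_iff_nhdsWithin_neBot.mp
        rw [closure_Ioo (ne_of_lt habn)]
        exact ⟨habn.le, le_refl _⟩
      have h1 : Filter.Tendsto u (𝓝[Set.Ioo (-1:ℝ) b] b) (𝓝 (u b)) :=
        ((hu b hbIoo).continuousAt.tendsto).mono_left nhdsWithin_le_nhds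
      have h2 : Filter.Tendsto (fun t => u (2*x₀ - t)) (𝓝[Set.Ioo (-1:ℝ) b] b) (𝓝 0) := by
        have hin : Filter.Tendsto (fun t : ℝ => 2*x₀ - t) (𝓝[Set.Ioo (-1:ℝ) b] b)
            (𝓝[Set.Icc (-1:ℝ) 1] (-1)) := by
          apply tendsto_nhdsWithin_of_tendsto_nhds_of_eventually_within
          · have hcont : Filter.Tendsto (fun t : ℝ => 2*x₀ - t) (𝓝 b) (𝓝 (2*x₀ - b)) :=
              (tendsto_const_nhds.sub tendsto_id)
            have : 2*x₀ - b = -1 := by rw [hbd]; ring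
            rw [this] at hcont
            exact hcont.mono_left nhdsWithin_le_nhds
          · filter_upwards [eventually_mem_nhdsWithin] with t ht
            have h1' : -1 ≤ 2*x₀ - t := by linarith [ht.2]
            have h2' : 2*x₀ - t ≤ 1 := by linarith [ht.1]
            exact ⟨h1', h2'⟩
        have hcw : Filter.Tendsto u (𝓝[Set.Icc (-1:ℝ) 1] (-1)) (𝓝 0) := by
          have := hc.continuousWithinAt (show (-1:ℝ) ∈ Set.Icc (-1:ℝ) 1 by constructor <;> norm_num)
          rwa [ContinuousWithinAt, hum1] at this
        exact hcw.comp hin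
      have h1' : Filter.Tendsto u (𝓝[Set.Ioo (-1:ℝ) b] b) (𝓝 0) := by
        apply h2.congr'
        filter_upwards [eventually_mem_nhdsWithin] with t ht
        have hta : t ∈ Set.Ioo (max (-1:ℝ) (2*x₀-1)) (min (1:ℝ) (2*x₀+1)) := by
          rw [ha, hb]; exact ht
        exact (key t hta).symm
      have : u b = 0 := tendsto_nhds_unique h1 h1'
      exact absurd this (ne_of_lt (hneg b hbIoo))
    · -- x₀ > 0 : left endpoint a = 2x₀-1 ∈ (-1,1)
      have hb : min (1:ℝ) (2*x₀+1) = 1 := min_eq_left (by linarith)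
      have ha : max (-1:ℝ) (2*x₀-1) = 2*x₀-1 := max_eq_right (by linarith)
      set a : ℝ := 2*x₀-1 with had
      have haIoo : a ∈ Set.Ioo (-1:ℝ) 1 := ⟨by linarith, by linarith [hx₀.2]⟩
      have habn : a < 1 := by linarith [hx₀.2]
      haveI hne : (𝓝[Set.Ioo a (1:ℝ)] a).NeBot := by
        apply mem_closure_iff_nhdsWithin_neBot.mp
        rw [closure_Ioo (ne_of_lt habn)]
        exact ⟨le_refl _, habn.le⟩
      have h1 : Filter.Tendsto u (𝓝[Set.Ioo a (1:ℝ)] a) (𝓝 (u a)) :=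
        ((hu a haIoo).continuousAt.tendsto).mono_left nhdsWithin_le_nhds
      have h2 : Filter.Tendsto (fun t => u (2*x₀ - t)) (𝓝[Set.Ioo a (1:ℝ)] a) (𝓝 0) := by
        have hin : Filter.Tendsto (fun t : ℝ => 2*x₀ - t) (𝓝[Set.Ioo a (1:ℝ)] a)
            (𝓝[Set.Icc (-1:ℝ) 1] 1) := by
          apply tendsto_nhdsWithin_of_tendsto_nhds_of_eventually_within
          · have hcont : Filter.Tendsto (fun t : ℝ => 2*x₀ - t) (𝓝 a) (𝓝 (2*x₀ - a)) :=
              (tendsto_const_nhds.sub tendsto_id)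
            have : 2*x₀ - a = 1 := by rw [had]; ring
            rw [this] at hcont
            exact hcont.mono_left nhdsWithin_le_nhds
          · filter_upwards [eventually_mem_nhdsWithin] with t ht
            have h1' : -1 ≤ 2*x₀ - t := by linarith [ht.2]
            have h2' : 2*x₀ - t ≤ 1 := by linarith [ht.1]
            exact ⟨h1', h2'⟩
        have hcw : Filter.Tendsto u (𝓝[Set.Icc (-1:ℝ) 1] 1) (𝓝 0) := by
          have := hc.continuousWithinAt (show (1:ℝ) ∈ Set.Icc (-1:ℝ) 1 by constructor <;> norm_num)
          rwa [ContinuousWithinAt, hu1] at this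
        exact hcw.comp hin
      have h1' : Filter.Tendsto u (𝓝[Set.Ioo a (1:ℝ)] a) (𝓝 0) := by
        apply h2.congr'
        filter_upwards [eventually_mem_nhdsWithin] with t ht
        have hta : t ∈ Set.Ioo (max (-1:ℝ) (2*x₀-1)) (min (1:ℝ) (2*x₀+1)) := by
          rw [ha, hb]; exact ht
        exact (key t hta).symm
      have : u a = 0 := tendsto_nhds_unique h1 h1'
      exact absurd this (ne_of_lt (hneg a haIoo))
  -- conclude
  intro x hx
  rcases eq_or_lt_of_le hx.1 with h1 | h1
  · rw [← h1]; simp only [neg_neg]; rw [hum1, hu1]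
  rcases eq_or_lt_of_le hx.2 with h2 | h2
  · rw [h2]; rw [hum1, hu1]
  · have hxm : x ∈ Set.Ioo (max (-1:ℝ) (2*x₀-1)) (min (1:ℝ) (2*x₀+1)) := by
      rw [hx0]; norm_num; exact ⟨h1, h2⟩
    have := key x hxm
    rw [hx0] at this
    have harg : 2*(0:ℝ) - x = -x := by ring
    rw [harg] at this
    exact this.symm
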